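/- Let W be a set of w distinct points in projective space ℙ^N over ℂ spanning a linear subspace of projective dimension at least 3. If w ≤ 2u − 2 and W does not impose independent conditions on degree-(u−2) forms, then there exists a line in ℙ^N containing at least u points of W. -/

import Mathlib

open MvPolynomial

variable {n : ℕ}

/-- From a vector not in the span of a set, get a homogeneous linear polynomial
vanishing on the set but not at the vector. -/
lemma lin_exists (S : Set (Fin n → ℂ)) (p : Fin n → ℂ)
    (hp : p ∉ Submodule.span ℂ S) :
    ∃ Q : MvPolynomial (Fin n) ℂ, Q.IsHomogeneous 1 ∧
      (∀ s ∈ S, eval s Q = 0) ∧ eval p Q ≠ 0 := by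
  set U := Submodule.span ℂ S
  have hmk : (Submodule.Quotient.mk p : (Fin n → ℂ) ⧸ U) ≠ 0 := by
    simpa [Submodule.Quotient.mk_eq_zero] using hp
  obtain ⟨g, hg⟩ : ∃ g : Module.Dual ℂ ((Fin n → ℂ) ⧸ U),
      g (Submodule.Quotient.mk p) ≠ 0 := by
    by_contra h
    push_neg at h
    exact hmk ((Module.forall_dual_apply_eq_zero_iff ℂ _).1 h)
  set φ : (Fin n → ℂ) →ₗ[ℂ] ℂ := g.comp U.mkQ with hφ
  have hφeval : ∀ v : Fin n → ℂ, eval v (∑ i, C (φ (Pi.single i 1)) * X i) = φ v := by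
    intro v
    have : v = ∑ i, v i • (Pi.single i (1:ℂ) : Fin n → ℂ) := by
      ext j; simp [Pi.single_apply]
    rw [map_sum]
    conv_rhs => rw [this]
    rw [map_sum]
    congr 1; ext i
    simp [mul_comm]
  refine ⟨∑ i, C (φ (Pi.single i 1)) * X i, ?_, ?_, ?_⟩
  · apply IsHomogeneous.sum
    intro i _
    simpa using (isHomogeneous_C _ (φ (Pi.single i 1))).mul (isHomogeneous_X _ i)
  · intro s hs
    rw [hφeval]
    have : s ∈ U := Submodule.subset_span hs
    have h0 : (Submodule.Quotient.mk s : (Fin n → ℂ) ⧸ U) = 0 := (Submodule.Quotient.mk_eq_zero U).2 this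
    simp [hφ, Submodule.mkQ_apply, h0]
  · rw [hφeval]
    simpa [hφ] using hg


/-- `Cov j S p`: there is a degree-`j` form vanishing on `S` and not at `p`. -/
def Cov (j : ℕ) (S : Set (Projectivization ℂ (Fin n → ℂ)))
    (p : Projectivization ℂ (Fin n → ℂ)) : Prop :=
  ∃ Q : MvPolynomial (Fin n) ℂ, Q.IsHomogeneous j ∧
    (∀ q ∈ S, eval q.rep Q = 0) ∧ eval p.rep Q ≠ 0

lemma Cov.mul {j₁ j₂ : ℕ} {S₁ S₂ : Set (Projectivization ℂ (Fin n → ℂ))}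
    {p : Projectivization ℂ (Fin n → ℂ)} (h₁ : Cov j₁ S₁ p) (h₂ : Cov j₂ S₂ p) :
    Cov (j₁ + j₂) (S₁ ∪ S₂) p := by
  obtain ⟨Q₁, hQ₁, hv₁, hp₁⟩ := h₁
  obtain ⟨Q₂, hQ₂, hv₂, hp₂⟩ := h₂
  refine ⟨Q₁ * Q₂, hQ₁.mul hQ₂, ?_, ?_⟩
  · rintro q (hq | hq) <;> simp [hv₁, hv₂, hq]
  · simp [hp₁, hp₂]

lemma Cov.mono {j : ℕ} {S T : Set (Projectivization ℂ (Fin n → ℂ))}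
    {p : Projectivization ℂ (Fin n → ℂ)} (h : Cov j S p) (hTS : T ⊆ S) :
    Cov j T p := by
  obtain ⟨Q, hQ, hv, hp⟩ := h
  exact ⟨Q, hQ, fun q hq => hv q (hTS hq), hp⟩

lemma cov_of_span {S : Set (Projectivization ℂ (Fin n → ℂ))}
    {p : Projectivization ℂ (Fin n → ℂ)}
    (h : p.rep ∉ Submodule.span ℂ (Projectivization.rep '' S)) : Cov 1 S p := by
  obtain ⟨Q, hQ, hv, hp⟩ := lin_exists _ _ h
  exact ⟨Q, hQ, fun q hq => hv q.rep ⟨q, hq, rfl⟩, hp⟩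

lemma cov_empty (j : ℕ) (p : Projectivization ℂ (Fin n → ℂ)) : Cov j ∅ p := by
  induction j with
  | zero => exact ⟨1, isHomogeneous_one _ _, by simp, by simp⟩
  | succ j ih =>
      have h1 : Cov 1 (∅ : Set (Projectivization ℂ (Fin n → ℂ))) p := by
        apply cov_of_span
        simp [Projectivization.rep_nonzero]
      simpa [Nat.add_comm] using h1.mul ih

lemma Cov.pad {j j' : ℕ} {S : Set (Projectivization ℂ (Fin n → ℂ))}
    {p : Projectivization ℂ (Fin n → ℂ)} (h : Cov j S p) (hj : j ≤ j') :
    Cov j' S p := by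
  obtain ⟨m, rfl⟩ := Nat.exists_eq_add_of_le hj
  simpa using h.mul (cov_empty m p)

lemma cov_of_card {j : ℕ} {S : Set (Projectivization ℂ (Fin n → ℂ))}
    {p : Projectivization ℂ (Fin n → ℂ)} (hfin : S.Finite) (hp : p ∉ S)
    (hcard : S.ncard ≤ j) : Cov j S p := by
  induction j generalizing S with
  | zero =>
      have : S = ∅ := by
        rw [← Set.ncard_eq_zero hfin]; omega
      rw [this]; exact cov_empty 0 p
  | succ j ih =>
      rcases Set.eq_empty_or_nonempty S with rfl | ⟨a, ha⟩
      · exact cov_empty _ p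
      · have hpa : p.rep ∉ Submodule.span ℂ (Projectivization.rep '' {a}) := by
          simp only [Set.image_singleton]
          intro hmem
          rw [Submodule.mem_span_singleton] at hmem
          obtain ⟨c, hc⟩ := hmem
          have hc0 : c ≠ 0 := by
            rintro rfl; exact p.rep_nonzero (by simpa using hc.symm)
          have : p = a := by
            conv_lhs => rw [← p.mk_rep]
            conv_rhs => rw [← a.mk_rep]
            rw [Projectivization.mk_eq_mk_iff]
            exact ⟨Units.mk0 c hc0, hc⟩
          exact hp (this ▸ ha)
        have h1 : Cov 1 {a} p := cov_of_span hpa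
        have h2 : Cov j (S \ {a}) p := by
          apply ih (hfin.diff) (fun h => hp h.1)
          have := Set.ncard_diff_singleton_lt_of_mem ha hfin
          omega
        have := h1.mul h2
        rw [Set.union_diff_cancel (by simpa using ha)] at this
        simpa [Nat.add_comm] using this


lemma proj_eq_of_mem_span_singleton {p q : Projectivization ℂ (Fin n → ℂ)}
    (h : p.rep ∈ (ℂ ∙ q.rep)) : p = q := by
  rw [Submodule.mem_span_singleton] at h
  obtain ⟨c, hc⟩ := h
  have hc0 : c ≠ 0 := by
    rintro rfl; exact p.rep_nonzero (by simpa using hc.symm)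
  conv_lhs => rw [← p.mk_rep]
  conv_rhs => rw [← q.mk_rep]
  rw [Projectivization.mk_eq_mk_iff]
  exact ⟨Units.mk0 c hc0, hc⟩

lemma span_pair_eq_of_mem {p z y : Projectivization ℂ (Fin n → ℂ)} (hzp : z ≠ p)
    (h : z.rep ∈ Submodule.span ℂ {p.rep, y.rep}) :
    Submodule.span ℂ {p.rep, z.rep} = Submodule.span ℂ {p.rep, y.rep} := by
  rw [Submodule.mem_span_pair] at h
  obtain ⟨a, b, hab⟩ := h
  have hb : b ≠ 0 := by
    rintro rfl
    refine hzp (proj_eq_of_mem_span_singleton ?_)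
    rw [Submodule.mem_span_singleton]
    exact ⟨a, by simpa using hab⟩
  apply le_antisymm
  · rw [Submodule.span_le]
    rintro x (rfl | rfl)
    · exact Submodule.subset_span (by left; rfl)
    · rw [SetLike.mem_coe, Submodule.mem_span_pair]
      exact ⟨a, b, hab⟩
  · rw [Submodule.span_le]
    rintro x (rfl | rfl)
    · exact Submodule.subset_span (by left; rfl)
    · rw [SetLike.mem_coe, Submodule.mem_span_pair]
      refine ⟨-(b⁻¹ * a), b⁻¹, ?_⟩
      rw [← hab, smul_add, smul_smul, smul_smul]
      rw [show b⁻¹ * b = 1 by field_simp]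
      module

/-- The set of points of `Y` on the line through `p` and `y`. -/
def fib (Y : Set (Projectivization ℂ (Fin n → ℂ)))
    (p y : Projectivization ℂ (Fin n → ℂ)) : Set (Projectivization ℂ (Fin n → ℂ)) :=
  {z ∈ Y | z.rep ∈ Submodule.span ℂ {p.rep, y.rep}}

lemma fib_subset (Y : Set (Projectivization ℂ (Fin n → ℂ))) (p y) :
    fib Y p y ⊆ Y := fun _ h => h.1

lemma mem_fib_self {Y : Set (Projectivization ℂ (Fin n → ℂ))} {p y} (hy : y ∈ Y) :
    y ∈ fib Y p y :=
  ⟨hy, Submodule.subset_span (by right; rfl)⟩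

lemma fib_eq {Y : Set (Projectivization ℂ (Fin n → ℂ))} {p y z}
    (hp : p ∉ Y) (hz : z ∈ fib Y p y) : fib Y p z = fib Y p y := by
  have hzp : z ≠ p := fun h => hp (h ▸ hz.1)
  have := span_pair_eq_of_mem hzp hz.2
  unfold fib
  rw [this]

lemma fib_mono {Y Y' : Set (Projectivization ℂ (Fin n → ℂ))} {p y} (h : Y' ⊆ Y) :
    fib Y' p y ⊆ fib Y p y := fun z hz => ⟨h hz.1, hz.2⟩

lemma fib_disjoint {Y : Set (Projectivization ℂ (Fin n → ℂ))} {p y z}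
    (hp : p ∉ Y) (hz : z ∈ Y) (hzy : z ∉ fib Y p y) :
    Disjoint (fib Y p z) (fib Y p y) := by
  rw [Set.disjoint_left]
  intro w hwz hwy
  have h1 := fib_eq hp hwz
  have h2 := fib_eq hp hwy
  rw [show fib Y p y = fib Y p z from h2 ▸ h1] at hzy
  exact hzy (mem_fib_self hz)

lemma fib_mem_comm {Y : Set (Projectivization ℂ (Fin n → ℂ))} {p y z}
    (hp : p ∉ Y) (hy : y ∈ Y) (hz : z ∈ Y) (h : z ∈ fib Y p y) :
    y ∈ fib Y p z := by
  rw [fib_eq hp h]; exact mem_fib_self hy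

lemma p_not_mem_span_pair {Y : Set (Projectivization ℂ (Fin n → ℂ))} {p a b}
    (hp : p ∉ Y) (ha : a ∈ Y) (hb : b ∈ Y) (hba : b ∉ fib Y p a) :
    p.rep ∉ Submodule.span ℂ {a.rep, b.rep} := by
  intro h
  rw [Submodule.mem_span_pair] at h
  obtain ⟨α, β, hαβ⟩ := h
  by_cases hβ : β = 0
  · subst hβ
    refine hp ?_
    have : p = a := proj_eq_of_mem_span_singleton (by
      rw [Submodule.mem_span_singleton]; exact ⟨α, by simpa using hαβ⟩)
    exact this ▸ ha
  · refine hba ⟨hb, ?_⟩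
    rw [Submodule.mem_span_pair]
    refine ⟨β⁻¹, -(β⁻¹ * α), ?_⟩
    rw [← hαβ, smul_add, smul_smul, smul_smul]
    rw [show β⁻¹ * β = 1 by field_simp]
    module

lemma fib_diff_subset {Y : Set (Projectivization ℂ (Fin n → ℂ))} {p y}
    (T : Set (Projectivization ℂ (Fin n → ℂ))) :
    fib (Y \ T) p y ⊆ fib Y p y \ T :=
  fun z hz => ⟨⟨hz.1.1, hz.2⟩, hz.1.2⟩

lemma covC1 (j : ℕ) : ∀ (Y : Set (Projectivization ℂ (Fin n → ℂ))) (p),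
    Y.Finite → p ∉ Y → Y.ncard ≤ 2 * j → (∀ y ∈ Y, (fib Y p y).ncard ≤ j) →
    Cov j Y p := by
  induction j with
  | zero =>
      intro Y p hfin _ hcard _
      have : Y = ∅ := by rw [← Set.ncard_eq_zero hfin]; omega
      exact this ▸ cov_empty 0 p
  | succ j ih =>
    intro Y p hfin hp hcard hfib
    rcases Set.eq_empty_or_nonempty Y with rfl | hne
    · exact cov_empty _ p
    obtain ⟨a, ha, hamax⟩ : ∃ a ∈ Y, ∀ y ∈ Y, (fib Y p y).ncard ≤ (fib Y p a).ncard := by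
      obtain ⟨a, ha, h⟩ := hfin.toFinset.exists_max_image
        (fun y => (fib Y p y).ncard) (by simpa using hne)
      exact ⟨a, by simpa using ha, fun y hy => h y (by simpa using hy)⟩
    by_cases hYa : Y ⊆ fib Y p a
    · have : Y.ncard ≤ j + 1 := le_trans (Set.ncard_le_ncard hYa (hfin.subset (fib_subset Y p a))) (hfib a ha)
      exact cov_of_card hfin hp this
    · have hne2 : (Y \ fib Y p a).Nonempty := by
        obtain ⟨b0, hb0, hb0'⟩ := Set.not_subset.1 hYa
        exact ⟨b0, hb0, hb0'⟩
      obtain ⟨b, hb, hbmax⟩ : ∃ b ∈ Y \ fib Y p a,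
          ∀ y ∈ Y \ fib Y p a, (fib Y p y).ncard ≤ (fib Y p b).ncard := by
        obtain ⟨b, hbm, h⟩ := (hfin.diff).toFinset.exists_max_image
          (fun y => (fib Y p y).ncard) (by simpa using hne2)
        exact ⟨b, by simpa using hbm, fun y hy => h y (by simpa using hy)⟩
      have hbY : b ∈ Y := hb.1
      have hbfa : b ∉ fib Y p a := hb.2
      have hab : a ≠ b := fun h => hbfa (h ▸ mem_fib_self ha)
      have hpair : Cov 1 ({a, b} : Set _) p := by
        apply cov_of_span
        rw [Set.image_pair]
        exact p_not_mem_span_pair hp ha hbY hbfa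
      have habY : ({a, b} : Set _) ⊆ Y := by
        rintro x (rfl | rfl); exacts [ha, hbY]
      have hY'fin : (Y \ {a, b}).Finite := hfin.diff
      have hpY' : p ∉ Y \ ({a, b} : Set _) := fun h => hp h.1
      have hcard' : (Y \ ({a, b} : Set _)).ncard ≤ 2 * j := by
        have h2 : ({a, b} : Set _).ncard = 2 := Set.ncard_pair hab
        have hd := Set.ncard_diff habY (Set.toFinite _)
        have hge : 2 ≤ Y.ncard := by
          calc 2 = ({a, b} : Set _).ncard := h2.symm
          _ ≤ Y.ncard := Set.ncard_le_ncard habY hfin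
        omega
      have hfib' : ∀ y ∈ Y \ ({a, b} : Set _), (fib (Y \ ({a, b} : Set _)) p y).ncard ≤ j := by
        intro y hy
        have hyY : y ∈ Y := hy.1
        by_cases hya : y ∈ fib Y p a
        · have hsub : fib (Y \ ({a, b} : Set _)) p y ⊆ fib Y p a \ {a} := by
            refine le_trans (fib_diff_subset _) ?_
            rw [fib_eq hp hya]
            exact Set.diff_subset_diff_right (by simp)
          have h1 : (fib Y p a \ {a}).ncard < (fib Y p a).ncard :=
            Set.ncard_diff_singleton_lt_of_mem (mem_fib_self ha)
              (hfin.subset (fib_subset Y p a))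
          have h2 := Set.ncard_le_ncard hsub
            ((hfin.subset (fib_subset Y p a)).diff)
          have := hfib a ha
          omega
        · by_cases hyb : y ∈ fib Y p b
          · have hsub : fib (Y \ ({a, b} : Set _)) p y ⊆ fib Y p b \ {b} := by
              refine le_trans (fib_diff_subset _) ?_
              rw [fib_eq hp hyb]
              exact Set.diff_subset_diff_right (by simp)
            have h1 : (fib Y p b \ {b}).ncard < (fib Y p b).ncard :=
              Set.ncard_diff_singleton_lt_of_mem (mem_fib_self hbY)
                (hfin.subset (fib_subset Y p b))
            have h2 := Set.ncard_le_ncard hsub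
              ((hfin.subset (fib_subset Y p b)).diff)
            have := hfib b hbY
            omega
          · -- y in a third fiber
            have hfy : (fib Y p y).ncard ≤ (fib Y p b).ncard :=
              hbmax y ⟨hyY, hya⟩
            have hfa : (fib Y p y).ncard ≤ (fib Y p a).ncard := hamax y hyY
            have hd1 : Disjoint (fib Y p y) (fib Y p a) := fib_disjoint hp hyY hya
            have hd2 : Disjoint (fib Y p y) (fib Y p b) := fib_disjoint hp hyY hyb
            have hd3 : Disjoint (fib Y p b) (fib Y p a) := fib_disjoint hp hbY hbfa
            have hfiny := hfin.subset (fib_subset Y p y)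
            have hfina := hfin.subset (fib_subset Y p a)
            have hfinb := hfin.subset (fib_subset Y p b)
            have hsum : (fib Y p y).ncard + (fib Y p b).ncard + (fib Y p a).ncard ≤ Y.ncard := by
              have hu1 : (fib Y p y ∪ fib Y p b).ncard
                  = (fib Y p y).ncard + (fib Y p b).ncard :=
                Set.ncard_union_eq hd2 hfiny hfinb
              have hd4 : Disjoint (fib Y p y ∪ fib Y p b) (fib Y p a) :=
                Set.disjoint_union_left.2 ⟨hd1, hd3⟩
              have hu2 := Set.ncard_union_eq hd4 (hfiny.union hfinb) hfina
              have hsub : (fib Y p y ∪ fib Y p b) ∪ fib Y p a ⊆ Y := by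
                refine Set.union_subset (Set.union_subset ?_ ?_) ?_ <;> exact fib_subset Y p _
              have := Set.ncard_le_ncard hsub hfin
              omega
            have hsub2 : fib (Y \ ({a, b} : Set _)) p y ⊆ fib Y p y :=
              fib_mono Set.diff_subset
            have h2 := Set.ncard_le_ncard hsub2 hfiny
            omega
      have hcov' : Cov j (Y \ ({a, b} : Set _)) p := ih _ p hY'fin hpY' hcard' hfib'
      have := hpair.mul hcov'
      rw [Set.union_diff_cancel habY] at this
      simpa [Nat.add_comm] using this
lemma p_mem_of_mem_span_pair {p a c : Projectivization ℂ (Fin n → ℂ)} (hca : c ≠ a)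
    (h : c.rep ∈ Submodule.span ℂ {p.rep, a.rep}) :
    p.rep ∈ Submodule.span ℂ {a.rep, c.rep} := by
  rw [Submodule.mem_span_pair] at h
  obtain ⟨α, β, hαβ⟩ := h
  have hα : α ≠ 0 := by
    rintro rfl
    refine hca (proj_eq_of_mem_span_singleton ?_)
    rw [Submodule.mem_span_singleton]
    exact ⟨β, by simpa using hαβ⟩
  rw [Submodule.mem_span_pair]
  refine ⟨-(α⁻¹ * β), α⁻¹, ?_⟩
  rw [← hαβ, smul_add, smul_smul, smul_smul]
  rw [show α⁻¹ * α = 1 by field_simp]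
  module

lemma covC2 (k : ℕ) (Y : Set (Projectivization ℂ (Fin n → ℂ))) (p)
    (hfin : Y.Finite) (hp : p ∉ Y) (hcard : Y.ncard ≤ 2 * k + 1)
    (hfib : ∀ y ∈ Y, (fib Y p y).ncard ≤ k)
    (hbig : 4 ≤ Module.finrank ℂ
      (Submodule.span ℂ (Projectivization.rep '' (insert p Y)))) :
    Cov k Y p := by
  by_cases hsmall : Y.ncard ≤ 2 * k
  · exact covC1 k Y p hfin hp hsmall hfib
  have hYcard : Y.ncard = 2 * k + 1 := by omega
  have hkpos : 1 ≤ k := by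
    obtain ⟨y, hy⟩ : Y.Nonempty := Set.nonempty_of_ncard_ne_zero (by omega)
    have h1 : 0 < (fib Y p y).ncard := by
      rw [Set.ncard_pos (hfin.subset (fib_subset Y p y))]
      exact ⟨y, mem_fib_self hy⟩
    have := hfib y hy
    omega
  have hne : Y.Nonempty := Set.nonempty_of_ncard_ne_zero (by omega)
  obtain ⟨a, ha, hamax⟩ : ∃ a ∈ Y, ∀ y ∈ Y, (fib Y p y).ncard ≤ (fib Y p a).ncard := by
    obtain ⟨a, ha', h⟩ := hfin.toFinset.exists_max_image
      (fun y => (fib Y p y).ncard) (by simpa using hne)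
    exact ⟨a, by simpa using ha', fun y hy => h y (by simpa using hy)⟩
  have hYa : ¬ Y ⊆ fib Y p a := by
    intro hsub
    have := Set.ncard_le_ncard hsub (hfin.subset (fib_subset Y p a))
    have := hfib a ha
    omega
  have hne2 : (Y \ fib Y p a).Nonempty := by
    obtain ⟨b0, hb0, hb0'⟩ := Set.not_subset.1 hYa
    exact ⟨b0, hb0, hb0'⟩
  obtain ⟨b, hb, hbmax⟩ : ∃ b ∈ Y \ fib Y p a,
      ∀ y ∈ Y \ fib Y p a, (fib Y p y).ncard ≤ (fib Y p b).ncard := by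
    obtain ⟨b, hbm, h⟩ := (hfin.diff).toFinset.exists_max_image
      (fun y => (fib Y p y).ncard) (by simpa using hne2)
    exact ⟨b, by simpa using hbm, fun y hy => h y (by simpa using hy)⟩
  have hbY : b ∈ Y := hb.1
  have hbfa : b ∉ fib Y p a := hb.2
  have hab : a ≠ b := fun h => hbfa (h ▸ mem_fib_self ha)
  have hpab : p.rep ∉ Submodule.span ℂ {a.rep, b.rep} :=
    p_not_mem_span_pair hp ha hbY hbfa
  -- find the third point c with p not in the span of a, b, c
  obtain ⟨c, hcY, hcab, hcspan⟩ : ∃ c, c ∈ Y ∧ (c ≠ a ∧ c ≠ b) ∧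
      p.rep ∉ Submodule.span ℂ {a.rep, b.rep, c.rep} := by
    by_contra h
    push_neg at h
    set U := Submodule.span ℂ ({p.rep, a.rep, b.rep} : Set _) with hU
    have hpU : p.rep ∈ U := Submodule.subset_span (by left; rfl)
    have haU : a.rep ∈ U := Submodule.subset_span (by right; left; rfl)
    have hbU : b.rep ∈ U := Submodule.subset_span (by right; right; rfl)
    have hYU : ∀ z ∈ Y, z.rep ∈ U := by
      intro z hz
      by_cases hza : z = a
      · exact hza ▸ haU
      by_cases hzb : z = b
      · exact hzb ▸ hbU
      have hz' := h z hz ⟨hza, hzb⟩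
      rw [show ({a.rep, b.rep, z.rep} : Set _) = insert a.rep {b.rep, z.rep} from rfl,
        Submodule.mem_span_insert] at hz'
      obtain ⟨α, w, hw, hpw⟩ := hz'
      rw [Submodule.mem_span_pair] at hw
      obtain ⟨β, γ, hweq⟩ := hw
      rw [← hweq] at hpw
      have hγ : γ ≠ 0 := by
        rintro rfl
        apply hpab
        rw [Submodule.mem_span_pair]
        exact ⟨α, β, by rw [hpw]; module⟩
      have hzrep : γ • z.rep = p.rep - α • a.rep - β • b.rep := by
        rw [hpw]; module
      have hz2 : z.rep = γ⁻¹ • (p.rep - α • a.rep - β • b.rep) := by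
        rw [← hzrep, smul_smul, inv_mul_cancel₀ hγ, one_smul]
      rw [hz2]
      exact U.smul_mem _ (U.sub_mem (U.sub_mem hpU (U.smul_mem _ haU)) (U.smul_mem _ hbU))
    have hsub : Projectivization.rep '' (insert p Y) ⊆ (U : Set _) := by
      rintro _ ⟨q, hq, rfl⟩
      rcases hq with rfl | hq
      exacts [hpU, hYU q hq]
    have hle : Submodule.span ℂ (Projectivization.rep '' (insert p Y)) ≤ U :=
      Submodule.span_le.2 hsub
    have hrank : Module.finrank ℂ U ≤ 3 := by
      classical
      refine le_trans (finrank_span_le_card _) ?_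
      rw [Set.toFinset_insert, Set.toFinset_insert, Set.toFinset_singleton]
      have h1 := Finset.card_insert_le p.rep (insert a.rep ({b.rep} : Finset _))
      have h2 := Finset.card_insert_le a.rep ({b.rep} : Finset _)
      simp only [Finset.card_singleton] at h1 h2 ⊢
      omega
    have := Submodule.finrank_mono hle
    omega
  -- now remove the triple {a, b, c}
  have hca : c ≠ a := hcab.1
  have hcb : c ≠ b := hcab.2
  have hcfa : c ∉ fib Y p a := by
    intro hcf
    refine hcspan (Submodule.span_mono ?_ (p_mem_of_mem_span_pair hca hcf.2))
    intro x hx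
    rcases hx with rfl | rfl
    · left; rfl
    · right; right; rfl
  have hcfb : c ∉ fib Y p b := by
    intro hcf
    refine hcspan (Submodule.span_mono ?_ (p_mem_of_mem_span_pair hcb hcf.2))
    intro x hx
    rcases hx with rfl | rfl
    · right; left; rfl
    · right; right; rfl
  have htriple : Cov 1 ({a, b, c} : Set _) p := by
    apply cov_of_span
    rw [Set.image_insert_eq, Set.image_pair]
    exact hcspan
  have hTY : ({a, b, c} : Set _) ⊆ Y := by
    rintro x (rfl | rfl | rfl)
    exacts [ha, hbY, hcY]
  have hTcard : ({a, b, c} : Set _).ncard = 3 := by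
    rw [Set.ncard_insert_of_notMem (by simp [hab, hca.symm]) (Set.toFinite _),
      Set.ncard_pair (fun h => hcb h.symm)]
  have hY'fin : (Y \ ({a, b, c} : Set _)).Finite := hfin.diff
  have hpY' : p ∉ Y \ ({a, b, c} : Set _) := fun h => hp h.1
  have hY'card : (Y \ ({a, b, c} : Set _)).ncard = 2 * k - 2 := by
    rw [Set.ncard_diff hTY (Set.toFinite _), hTcard]
    omega
  have hfib' : ∀ y ∈ Y \ ({a, b, c} : Set _),
      (fib (Y \ ({a, b, c} : Set _)) p y).ncard ≤ k - 1 := by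
    intro y hy
    have hyY : y ∈ Y := hy.1
    have hdropbound : ∀ x : Projectivization ℂ (Fin n → ℂ), x ∈ Y → x ∈ ({a, b, c} : Set _) →
        y ∈ fib Y p x → (fib (Y \ ({a, b, c} : Set _)) p y).ncard ≤ k - 1 := by
      intro x hxY hxT hyx
      have hsub : fib (Y \ ({a, b, c} : Set _)) p y ⊆ fib Y p x \ {x} := by
        refine le_trans (fib_diff_subset _) ?_
        rw [fib_eq hp hyx]
        exact Set.diff_subset_diff_right (by simpa using hxT)
      have h1 : (fib Y p x \ {x}).ncard < (fib Y p x).ncard :=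
        Set.ncard_diff_singleton_lt_of_mem (mem_fib_self hxY)
          (hfin.subset (fib_subset Y p x))
      have h2 := Set.ncard_le_ncard hsub
        ((hfin.subset (fib_subset Y p x)).diff)
      have := hfib x hxY
      omega
    by_cases hya : y ∈ fib Y p a
    · exact hdropbound a ha (by left; rfl) hya
    by_cases hyb : y ∈ fib Y p b
    · exact hdropbound b hbY (by right; left; rfl) hyb
    by_cases hyc : y ∈ fib Y p c
    · exact hdropbound c hcY (by right; right; rfl) hyc
    -- fourth fiber
    have hfy : (fib Y p y).ncard ≤ (fib Y p b).ncard := hbmax y ⟨hyY, hya⟩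
    have hfa : (fib Y p y).ncard ≤ (fib Y p a).ncard := hamax y hyY
    have hd1 : Disjoint (fib Y p y) (fib Y p a) := fib_disjoint hp hyY hya
    have hd2 : Disjoint (fib Y p y) (fib Y p b) := fib_disjoint hp hyY hyb
    have hd3 : Disjoint (fib Y p b) (fib Y p a) := fib_disjoint hp hbY hbfa
    have hfiny := hfin.subset (fib_subset Y p y)
    have hfina := hfin.subset (fib_subset Y p a)
    have hfinb := hfin.subset (fib_subset Y p b)
    have hsum : (fib Y p y).ncard + (fib Y p b).ncard + (fib Y p a).ncard ≤ Y.ncard := by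
      have hu1 : (fib Y p y ∪ fib Y p b).ncard
          = (fib Y p y).ncard + (fib Y p b).ncard :=
        Set.ncard_union_eq hd2 hfiny hfinb
      have hd4 : Disjoint (fib Y p y ∪ fib Y p b) (fib Y p a) :=
        Set.disjoint_union_left.2 ⟨hd1, hd3⟩
      have hu2 := Set.ncard_union_eq hd4 (hfiny.union hfinb) hfina
      have hsub : (fib Y p y ∪ fib Y p b) ∪ fib Y p a ⊆ Y := by
        refine Set.union_subset (Set.union_subset ?_ ?_) ?_ <;> exact fib_subset Y p _
      have := Set.ncard_le_ncard hsub hfin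
      omega
    have h2 := Set.ncard_le_ncard (fib_mono (Set.diff_subset) :
      fib (Y \ ({a, b, c} : Set _)) p y ⊆ fib Y p y) hfiny
    by_cases hk1 : k = 1
    · exfalso
      have : (Y \ ({a, b, c} : Set _)).ncard = 0 := by omega
      rw [Set.ncard_eq_zero hY'fin] at this
      rw [this] at hy
      exact hy
    · omega
  have hcov' : Cov (k - 1) (Y \ ({a, b, c} : Set _)) p :=
    covC1 (k - 1) _ p hY'fin hpY' (by omega) hfib'
  have hfinal := htriple.mul hcov'
  rw [Set.union_diff_cancel hTY] at hfinal
  have hk : 1 + (k - 1) = k := by omega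
  rwa [hk] at hfinal

/-- A finite set `Z` of points of projective space imposes independent conditions on
degree-`i` forms: for each `p ∈ Z` there is a degree-`i` form vanishing on `Z \ {p}`
but not at `p`. -/
def ImposesIndepConditions {σ : Type*} (i : ℕ)
    (Z : Set (Projectivization ℂ (σ → ℂ))) : Prop :=
  ∀ p ∈ Z, ∃ Q : MvPolynomial σ ℂ, Q.IsHomogeneous i ∧
    (∀ q ∈ Z, q ≠ p → MvPolynomial.eval q.rep Q = 0) ∧
    MvPolynomial.eval p.rep Q ≠ 0

/-- If `w ≤ 2u - 2` points spanning at least a `ℙ³` fail to impose independent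
conditions in degree `u - 2`, then some line contains at least `u` of them. -/
theorem stmt8 (N w u : ℕ)
    (W : Set (Projectivization ℂ (Fin (N + 1) → ℂ)))
    (hWfin : W.Finite) (hWcard : W.ncard = w)
    (hspan : 4 ≤ Module.finrank ℂ ↥(⨆ p ∈ W, Projectivization.submodule p))
    (hw : w ≤ 2 * u - 2)
    (hW : ¬ ImposesIndepConditions (u - 2) W) :
    ∃ E : Submodule ℂ (Fin (N + 1) → ℂ), Module.finrank ℂ E = 2 ∧
      u ≤ {p ∈ W | p.submodule ≤ E}.ncard := by
  classical
  by_contra hcon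
  push_neg at hcon
  -- rewrite the spanning hypothesis as the span of representatives
  have hsup : (⨆ p ∈ W, Projectivization.submodule p)
      = Submodule.span ℂ (Projectivization.rep '' W) := by
    rw [Submodule.span_eq_iSup_of_singleton_spans, iSup_image]
    simp only [Projectivization.submodule_eq]
  rw [hsup] at hspan
  -- dimension count: W has at least 4 points, so u ≥ 3
  have hw4 : 4 ≤ W.ncard := by
    letI := (hWfin.image Projectivization.rep).fintype
    have h1 := finrank_span_le_card (R := ℂ) (Projectivization.rep '' W)
    rw [← Set.ncard_eq_toFinset_card'] at h1
    have h2 := Set.ncard_image_le (f := Projectivization.rep) (s := W) hWfin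
    omega
  have hu3 : 3 ≤ u := by omega
  apply hW
  intro p hpW
  set Y : Set (Projectivization ℂ (Fin (N + 1) → ℂ)) := W \ {p} with hY
  have hYfin : Y.Finite := hWfin.diff
  have hpY : p ∉ Y := fun h => h.2 rfl
  have hYcard : Y.ncard = w - 1 := by
    rw [hY, Set.ncard_diff_singleton_of_mem hpW, hWcard]
  have hfibY : ∀ y ∈ Y, (fib Y p y).ncard ≤ u - 2 := by
    intro y hy
    have hyp : y ≠ p := fun h => hy.2 (by simp [h])
    set E := Submodule.span ℂ ({p.rep, y.rep} :
      Set (Fin (N + 1) → ℂ)) with hE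
    have hli : LinearIndependent ℂ ![p.rep, y.rep] := by
      rw [LinearIndependent.pair_iff]
      intro s t hst
      by_cases ht : t = 0
      · subst ht
        have : s • p.rep = 0 := by simpa using hst
        rcases smul_eq_zero.1 this with h | h
        · exact ⟨h, rfl⟩
        · exact absurd h p.rep_nonzero
      · exfalso
        apply hyp
        apply proj_eq_of_mem_span_singleton
        rw [Submodule.mem_span_singleton]
        refine ⟨-(t⁻¹ * s), ?_⟩
        have h1 : t • y.rep = -(s • p.rep) := eq_neg_of_add_eq_zero_right hst
        have h2 : y.rep = t⁻¹ • (t • y.rep) := by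
          rw [smul_smul, inv_mul_cancel₀ ht, one_smul]
        rw [h2, h1, smul_neg, smul_smul, ← neg_smul]
    have hE2 : Module.finrank ℂ E = 2 := by
      have := finrank_span_eq_card hli
      rw [show Set.range ![p.rep, y.rep] = {p.rep, y.rep} by
        ext v; simp [Matrix.range_cons, Matrix.range_empty]; tauto] at this
      simpa using this
    have hlt := hcon E hE2
    have hsub : insert p (fib Y p y) ⊆ {q ∈ W | q.submodule ≤ E} := by
      rintro z (rfl | hz)
      · refine ⟨hpW, ?_⟩
        rw [Projectivization.submodule_eq, Submodule.span_singleton_le_iff_mem]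
        exact Submodule.subset_span (by left; rfl)
      · refine ⟨hz.1.1, ?_⟩
        rw [Projectivization.submodule_eq, Submodule.span_singleton_le_iff_mem]
        exact hz.2
    have hsetfin : ({q ∈ W | q.submodule ≤ E}).Finite :=
      hWfin.subset (Set.sep_subset _ _)
    have hmono := Set.ncard_le_ncard hsub hsetfin
    have hins : (insert p (fib Y p y)).ncard = (fib Y p y).ncard + 1 :=
      Set.ncard_insert_of_notMem (fun h => hpY (fib_subset Y p y h))
        (hYfin.subset (fib_subset Y p y))
    omega
  have hbigY : 4 ≤ Module.finrank ℂ
      (Submodule.span ℂ (Projectivization.rep '' (insert p Y))) := by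
    rw [hY, Set.insert_diff_singleton, Set.insert_eq_of_mem hpW]
    exact hspan
  obtain ⟨Q, hQh, hQv, hQp⟩ := covC2 (u - 2) Y p hYfin hpY (by omega) hfibY hbigY
  exact ⟨Q, hQh, fun q hq hqp => hQv q ⟨hq, by simp [hqp]⟩, hQp⟩
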